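/- If 0 < δ and ε = δ/2, then every (ε,δ)-Delone set in ℝ is of the form a + δ·ℤ for some a ∈ ℝ; in particular it is periodic with period δ. -/

import Mathlib

def IsSeparated' (δ : ℝ) (S : Set ℝ) : Prop :=
  ∀ x ∈ S, ∀ y ∈ S, x ≠ y → δ ≤ dist x y

def IsDelone (ε δ : ℝ) (S : Set ℝ) : Prop :=
  (∀ x : ℝ, ∃ y ∈ S, dist x y ≤ ε) ∧ IsSeparated' δ S

/-- Every (δ/2, δ)-Delone set in ℝ is of the form a + δ·ℤ, hence periodic with period δ. -/
theorem delone_half_periodic (δ : ℝ) (hδ : 0 < δ) (S : Set ℝ)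
    (hS : IsDelone (δ / 2) δ S) :
    ∃ a : ℝ, S = {x : ℝ | ∃ k : ℤ, x = a + δ * k} := by
  obtain ⟨hdense, hsep⟩ := hS
  obtain ⟨a, haS, -⟩ := hdense 0
  have stepUp : ∀ x ∈ S, x + δ ∈ S := by
    intro x hx
    obtain ⟨y, hyS, hy⟩ := hdense (x + δ)
    rw [Real.dist_eq] at hy
    have hy' := abs_le.mp hy
    have hylo : x + δ / 2 ≤ y := by linarith [hy'.2]
    have hyhi : y ≤ x + 3 * δ / 2 := by linarith [hy'.1]
    have hxy : x ≠ y := by intro h; subst h; linarith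
    have h1 : δ ≤ dist x y := hsep x hx y hyS hxy
    rw [Real.dist_eq, abs_of_nonpos (by linarith)] at h1
    -- so y ≥ x + δ
    have hyge : x + δ ≤ y := by linarith
    have hye : y = x + δ := by
      by_contra hne
      have hgt : x + δ < y := lt_of_le_of_ne hyge (fun h => hne h.symm)
      obtain ⟨z, hzS, hz⟩ := hdense ((x + y) / 2)
      rw [Real.dist_eq] at hz
      have hz' := abs_le.mp hz
      have hzlo : (x + y) / 2 - δ / 2 ≤ z := by linarith [hz'.2]
      have hzhi : z ≤ (x + y) / 2 + δ / 2 := by linarith [hz'.1]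
      have hzx : x < z := by linarith
      have hzy : z < y := by linarith
      have h2 : δ ≤ dist x z := hsep x hx z hzS (by intro h; subst h; linarith)
      have h3 : δ ≤ dist y z := hsep y hyS z hzS (by intro h; subst h; linarith)
      rw [Real.dist_eq, abs_of_nonpos (by linarith)] at h2
      rw [Real.dist_eq, abs_of_nonneg (by linarith)] at h3
      linarith
    rw [← hye]; exact hyS
  have stepDown : ∀ x ∈ S, x - δ ∈ S := by
    intro x hx
    obtain ⟨y, hyS, hy⟩ := hdense (x - δ)
    rw [Real.dist_eq] at hy
    have hy' := abs_le.mp hy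
    have hylo : x - 3 * δ / 2 ≤ y := by linarith [hy'.2]
    have hyhi : y ≤ x - δ / 2 := by linarith [hy'.1]
    have hxy : x ≠ y := by intro h; subst h; linarith
    have h1 : δ ≤ dist x y := hsep x hx y hyS hxy
    rw [Real.dist_eq, abs_of_nonneg (by linarith)] at h1
    have hyle : y ≤ x - δ := by linarith
    have hye : y = x - δ := by
      by_contra hne
      have hgt : y < x - δ := lt_of_le_of_ne hyle hne
      obtain ⟨z, hzS, hz⟩ := hdense ((x + y) / 2)
      rw [Real.dist_eq] at hz
      have hz' := abs_le.mp hz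
      have hzlo : (x + y) / 2 - δ / 2 ≤ z := by linarith [hz'.2]
      have hzhi : z ≤ (x + y) / 2 + δ / 2 := by linarith [hz'.1]
      have hzx : z < x := by linarith
      have hzy : y < z := by linarith
      have h2 : δ ≤ dist x z := hsep x hx z hzS (by intro h; subst h; linarith)
      have h3 : δ ≤ dist y z := hsep y hyS z hzS (by intro h; subst h; linarith)
      rw [Real.dist_eq, abs_of_nonneg (by linarith)] at h2
      rw [Real.dist_eq, abs_of_nonpos (by linarith)] at h3
      linarith
    rw [← hye]; exact hyS
  have hmem : ∀ k : ℤ, a + δ * k ∈ S := by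
    intro k
    induction k using Int.induction_on with
    | zero => simpa using haS
    | succ k ih =>
        have := stepUp _ ih
        have he : a + δ * ((k : ℤ) + 1 : ℤ) = a + δ * k + δ := by push_cast; ring
        rwa [he]
    | pred k ih =>
        have := stepDown _ ih
        have he : a + δ * (-(k : ℤ) - 1 : ℤ) = a + δ * (-(k : ℤ) : ℤ) - δ := by
          push_cast; ring
        rwa [he]
  refine ⟨a, Set.ext fun s => ⟨fun hs => ?_, fun ⟨k, hk⟩ => hk ▸ hmem k⟩⟩
  set k : ℤ := ⌊(s - a) / δ⌋ with hkdef
  have hk1 : (k : ℝ) ≤ (s - a) / δ := Int.floor_le _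
  have hk2 : (s - a) / δ < k + 1 := Int.lt_floor_add_one _
  have hle : a + δ * k ≤ s := by
    have := mul_le_mul_of_nonneg_left hk1 hδ.le
    rw [mul_div_cancel₀ _ hδ.ne'] at this
    linarith
  have hlt : s < a + δ * (k + 1) := by
    have := mul_lt_mul_of_pos_left hk2 hδ
    rw [mul_div_cancel₀ _ hδ.ne'] at this
    linarith
  refine ⟨k, ?_⟩
  by_contra hne
  have hne' : s ≠ a + δ * k := hne
  have h1 : δ ≤ dist s (a + δ * k) := hsep s hs _ (hmem k) hne'
  rw [Real.dist_eq, abs_of_nonneg (by linarith)] at h1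
  linarith
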